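/- Let C be the Cantor set, τ its usual topology, and τ' the MV-topology on C generated by the fuzzy open balls β_r(α) induced by the Euclidean metric. A map f : C → C is an MV-homeomorphism with respect to τ' if and only if it is a homeomorphism with respect to τ. (Concretely: a bijection f of C is a homeomorphism of (C,τ) iff for every function α : C → [0,1] of the form ⋁_{i=1}^n (qᵢ)̄_{Uᵢ} with qᵢ rational and Uᵢ clopen, both α ∘ f and α ∘ f⁻¹ are again of this form.) -/

import Mathlib

open MeasureTheory Set ENNReal Pointwise

lemma volume_preCantorSet_le (n : ℕ) :
    volume (preCantorSet n) ≤ (2/3 : ℝ≥0∞) ^ n := by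
  induction n with
  | zero =>
      simp [preCantorSet, Real.volume_Icc]
  | succ n ih =>
      have h3 : ((· / 3) '' preCantorSet n) = (3⁻¹ : ℝ) • preCantorSet n := by
        ext x; simp [Set.mem_smul_set, div_eq_inv_mul, eq_comm]
      have h3' : ((fun x : ℝ => (2 + x) / 3) '' preCantorSet n)
          = (3⁻¹ : ℝ) • ((2 : ℝ) +ᵥ preCantorSet n) := by
        ext x
        simp only [Set.mem_smul_set, Set.mem_image, Set.mem_vadd_set]
        constructor
        · rintro ⟨y, hy, rfl⟩; exact ⟨2 + y, ⟨y, hy, rfl⟩, by simp only [smul_eq_mul]; ring⟩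
        · rintro ⟨z, ⟨y, hy, rfl⟩, rfl⟩; exact ⟨y, hy, by simp only [vadd_eq_add, smul_eq_mul]; ring⟩
      have hv : ∀ s : Set ℝ, volume ((3⁻¹ : ℝ) • s) = ENNReal.ofReal (3⁻¹) * volume s := by
        intro s
        rw [MeasureTheory.Measure.addHaar_smul]
        norm_num [abs_of_nonneg]
      calc volume (preCantorSet (n+1))
          ≤ volume ((· / 3) '' preCantorSet n)
            + volume ((fun x : ℝ => (2 + x) / 3) '' preCantorSet n) := by
            rw [preCantorSet_succ]; exact measure_union_le _ _
        _ = ENNReal.ofReal (3⁻¹) * volume (preCantorSet n)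
            + ENNReal.ofReal (3⁻¹) * volume (preCantorSet n) := by
            rw [h3, h3', hv, hv, measure_vadd]
        _ ≤ ENNReal.ofReal (3⁻¹) * (2/3:ℝ≥0∞)^n + ENNReal.ofReal (3⁻¹) * (2/3:ℝ≥0∞)^n := by
            gcongr
        _ = (2 * ENNReal.ofReal (3⁻¹)) * (2/3:ℝ≥0∞)^n := by ring
        _ = (2/3 : ℝ≥0∞) ^ (n+1) := by
            rw [pow_succ, mul_comm ((2/3:ℝ≥0∞)^n)]
            congr 1
            rw [ENNReal.ofReal_inv_of_pos (by norm_num), ENNReal.ofReal_ofNat]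
            rw [ENNReal.div_eq_inv_mul]
            ring

lemma volume_cantorSet : volume cantorSet = 0 := by
  have hle : ∀ n, volume cantorSet ≤ (2/3 : ℝ≥0∞) ^ n := fun n =>
    le_trans (measure_mono (Set.iInter_subset _ n)) (volume_preCantorSet_le n)
  have htend : Filter.Tendsto (fun n => (2/3 : ℝ≥0∞) ^ n) Filter.atTop (nhds 0) :=
    ENNReal.tendsto_pow_atTop_nhds_zero_of_lt_one
      (by rw [ENNReal.div_lt_iff] <;> norm_num)
  exact le_antisymm (ge_of_tendsto' htend hle) zero_le

lemma isTotallyDisconnected_cantorSet : IsTotallyDisconnected cantorSet := by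
  intro t hts ht
  intro x hx y hy
  have key : ∀ a b : ℝ, a ∈ t → b ∈ t → a ≤ b := by
    intro a b ha hb
    by_contra h
    push_neg at h
    have hsub : Set.Icc b a ⊆ cantorSet := (ht.Icc_subset hb ha).trans hts
    have hvol : volume (Set.Icc b a) = 0 :=
      le_antisymm (le_trans (measure_mono hsub) volume_cantorSet.le) zero_le
    rw [Real.volume_Icc] at hvol
    exact (ENNReal.ofReal_pos.mpr (by linarith)).ne' hvol
  exact le_antisymm (key x y hx hy) (key y x hy hx)

instance : TotallyDisconnectedSpace ↥cantorSet :=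
  totallyDisconnectedSpace_subtype_iff.2 isTotallyDisconnected_cantorSet

instance : CompactSpace ↥cantorSet := isCompact_iff_compactSpace.mp isCompact_cantorSet

/-- `q̄_U : C → [0,1] ⊆ ℝ`: the function equal to `q` on `U` and `0` elsewhere. -/
noncomputable def scaledIndicator {C : Type*} (U : Set C) (q : ℝ) : C → ℝ :=
  open Classical in fun x => if x ∈ U then q else 0

/-- The set of all finite (pointwise) suprema `⋁_{i} (qᵢ)̄_{Uᵢ}` with each `qᵢ` a rational
number in `[0,1]` and each `Uᵢ` clopen: a basis of clopens for the MV-topology induced on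
the Cantor set by the Euclidean metric. -/
def ratClopenSups (C : Type*) [TopologicalSpace C] : Set (C → ℝ) :=
  {f | ∃ (n : ℕ) (q : Fin n → ℝ) (U : Fin n → Set C),
    (∀ i, q i ∈ Set.Icc (0 : ℝ) 1 ∧ ∃ r : ℚ, q i = (r : ℝ)) ∧
    (∀ i, IsClopen (U i)) ∧
    f = fun x => ⨆ i, scaledIndicator (U i) (q i) x}

lemma continuous_scaledIndicator {C : Type*} [TopologicalSpace C] {U : Set C}
    (hU : IsClopen U) (q : ℝ) : Continuous (scaledIndicator U q) := by
  unfold scaledIndicator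
  classical
  exact continuous_if
    (fun a ha => absurd (hU.frontier_eq ▸ ha) (Set.notMem_empty a))
    continuousOn_const continuousOn_const

lemma continuous_of_mem_ratClopenSups {C : Type*} [TopologicalSpace C] {f : C → ℝ}
    (hf : f ∈ ratClopenSups C) : Continuous f := by
  obtain ⟨n, q, U, hq, hU, rfl⟩ := hf
  rcases Nat.eq_zero_or_pos n with rfl | hn
  · simpa using continuous_const (y := (0:ℝ))
  · have : Nonempty (Fin n) := Fin.pos_iff_nonempty.mp hn
    have heq : (fun x => ⨆ i, scaledIndicator (U i) (q i) x)
        = fun x => Finset.univ.sup' Finset.univ_nonempty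
            (fun i => scaledIndicator (U i) (q i) x) := by
      funext x
      rw [Finset.sup'_univ_eq_ciSup]
    rw [heq]
    apply Continuous.finset_sup'_apply Finset.univ_nonempty
    intro i _
    exact continuous_scaledIndicator (hU i) (q i)

lemma scaledIndicator_comp {C D : Type*} (U : Set D) (q : ℝ) (g : C → D) :
    scaledIndicator U q ∘ g = scaledIndicator (g ⁻¹' U) q := rfl

lemma comp_mem_ratClopenSups {C : Type*} [TopologicalSpace C] {f : C → ℝ}
    (hf : f ∈ ratClopenSups C) {g : C → C} (hg : Continuous g) :
    f ∘ g ∈ ratClopenSups C := by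
  obtain ⟨n, q, U, hq, hU, rfl⟩ := hf
  exact ⟨n, q, fun i => g ⁻¹' U i, hq, fun i => (hU i).preimage hg, rfl⟩

lemma indicator_mem_ratClopenSups {C : Type*} [TopologicalSpace C] {U : Set C}
    (hU : IsClopen U) :
    (fun x => ⨆ _ : Fin 1, scaledIndicator U (1:ℝ) x) ∈ ratClopenSups C :=
  ⟨1, fun _ => (1:ℝ), fun _ => U,
    fun _ => ⟨⟨zero_le_one, le_refl _⟩, ⟨1, by norm_num⟩⟩, fun _ => hU, rfl⟩

lemma preimage_open_of_comp {C : Type*} [TopologicalSpace C] {U : Set C}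
    (hU : IsClopen U) {g : C → C}
    (h : ((fun x => ⨆ _ : Fin 1, scaledIndicator U (1:ℝ) x) ∘ g) ∈ ratClopenSups C) :
    IsOpen (g ⁻¹' U) := by
  have hc := continuous_of_mem_ratClopenSups h
  have heq : g ⁻¹' U = ((fun x => ⨆ _ : Fin 1, scaledIndicator U (1:ℝ) x) ∘ g) ⁻¹'
      (Set.Ioi (1/2 : ℝ)) := by
    ext x
    simp only [Set.mem_preimage, Function.comp_apply, Set.mem_Ioi, ciSup_const]
    unfold scaledIndicator
    split <;> simp_all <;> norm_num
  rw [heq]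
  exact isOpen_Ioi.preimage hc

/-- A bijection `f` of the Cantor set is a homeomorphism for the usual topology `τ` iff it
is an MV-homeomorphism for the induced MV-topology `τ'`, i.e. iff for every basic clopen
fuzzy set `α` (a finite supremum of rational-scaled clopen indicators) both `α ∘ f` and
`α ∘ f⁻¹` are again basic clopen fuzzy sets. -/
theorem cantor_mv_homeo_iff_homeo (e : ↥cantorSet ≃ ↥cantorSet) :
    (Continuous e ∧ Continuous e.symm) ↔
    (∀ α ∈ ratClopenSups (↥cantorSet),
      (α ∘ e) ∈ ratClopenSups (↥cantorSet) ∧ (α ∘ e.symm) ∈ ratClopenSups (↥cantorSet)) := by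
  constructor
  · rintro ⟨he, he'⟩ α hα
    exact ⟨comp_mem_ratClopenSups hα he, comp_mem_ratClopenSups hα he'⟩
  · intro h
    have hbasis : TopologicalSpace.IsTopologicalBasis
        { s : Set ↥cantorSet | IsClopen s } := loc_compact_Haus_tot_disc_of_zero_dim
    constructor
    · exact hbasis.continuous_iff.mpr fun s hs =>
        preimage_open_of_comp hs (h _ (indicator_mem_ratClopenSups hs)).1
    · exact hbasis.continuous_iff.mpr fun s hs =>
        preimage_open_of_comp hs (h _ (indicator_mem_ratClopenSups hs)).2
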